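/- Let (n_i)_{i<ω} be an increasing sequence with n_0 = 0 and n'_i + i·2^{n'_i} < n_{i+1} where n_i < n'_i. For each 0 < i < ω fix pairwise disjoint sets u_{i,τ} ⊆ [n'_i, n_{i+1}) of size i indexed by τ ∈ 2^{n'_i}, and let B = {y ∈ 2^ω : ∀ j > 0 ∃ k ∈ u_{j, y↾n'_j}, y(k) = 1} and T = {y↾n : y ∈ B, n ∈ ω}. Then μ(Lim T) = ∏_{i=1}^∞ (1 − 2^{−i}) > 0. -/

import Mathlib

open MeasureTheory Pointwise

/-- Cantor space `2^ω` with componentwise addition mod 2. -/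
abbrev Cantor : Type := ℕ → ZMod 2
/-- Finite binary sequences, the nodes of `2^{<ω}`. -/
abbrev FinSeq : Type := List (ZMod 2)

instance : TopologicalSpace (ZMod 2) := ⊥
instance : DiscreteTopology (ZMod 2) := ⟨rfl⟩
noncomputable instance : MeasurableSpace Cantor := borel Cantor
instance : BorelSpace Cantor := ⟨rfl⟩

/-- The uniform (Lebesgue) product measure on `2^ω`, realized as the Haar measure of the
compact group `2^ω` normalized so that the whole space has measure 1. -/
noncomputable def μC : Measure Cantor := Measure.addHaarMeasure ⊤

/-- `X` is null-additive: `X + A` is null for every null `A`. -/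
def NullAdditive (X : Set Cantor) : Prop := ∀ A : Set Cantor, μC A = 0 → μC (X + A) = 0

/-- `X` is meager-additive: `X + A` is meager for every meager `A`. -/
def MeagerAdditive (X : Set Cantor) : Prop := ∀ A : Set Cantor, IsMeagre A → IsMeagre (X + A)

/-- A tree on `2^{<ω}`: nonempty, closed under initial segments, and every node has
extensions in the tree of every greater length. -/
def IsTree (T : Set FinSeq) : Prop :=
  T.Nonempty ∧ (∀ σ τ : FinSeq, σ <+: τ → τ ∈ T → σ ∈ T) ∧
    ∀ σ ∈ T, ∀ n, σ.length < n → ∃ τ ∈ T, σ <+: τ ∧ τ.length = n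

/-- Restriction `x↾n` of `x ∈ 2^ω`. -/
def res (x : Cantor) (n : ℕ) : FinSeq := (List.range n).map x

/-- `Lim T = {x ∈ 2^ω : ∀ n, x↾n ∈ T}`. -/
def LimT (T : Set FinSeq) : Set Cantor := {x | ∀ n, res x n ∈ T}

/-- A nowhere dense tree: every node has an extension outside the tree. -/
def NwdTree (T : Set FinSeq) : Prop := ∀ η ∈ T, ∃ τ : FinSeq, η <+: τ ∧ τ ∉ T

/-- Componentwise mod-2 addition of finite sequences (of the same length). -/
def finAdd : FinSeq → FinSeq → FinSeq := List.zipWith (· + ·)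

/-- `T + S = {η + σ : η ∈ T, σ ∈ S, same length}`. -/
def treeSum (T S : Set FinSeq) : Set FinSeq :=
  {ρ | ∃ η ∈ T, ∃ σ ∈ S, η.length = σ.length ∧ ρ = finAdd η σ}

/-- `T^{[η]} = {τ ∈ T : τ ⊑ η or η ⊑ τ}`. -/
def through (T : Set FinSeq) (η : FinSeq) : Set FinSeq := {τ ∈ T | τ <+: η ∨ η <+: τ}

/-- `A^{fin}`: points agreeing with some point of `A` at all but finitely many coordinates. -/
def finEq (A : Set Cantor) : Set Cantor := {y | ∃ x ∈ A, ∀ᶠ n in Filter.atTop, y n = x n}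

/-- `U^{⟨ν⟩} = {τ : ν⌢τ ∈ U}`. -/
def above (U : Set FinSeq) (ν : FinSeq) : Set FinSeq := {τ | ν ++ τ ∈ U}

/-- A corset: a nondecreasing function `ω → ω \ {0}` tending to infinity. -/
def Corset (f : ℕ → ℕ) : Prop :=
  Monotone f ∧ (∀ n, 0 < f n) ∧ Filter.Tendsto f Filter.atTop Filter.atTop

/-- `S` is of width `f`: `|S ∩ 2^n| ≤ f n` for all `n`. -/
def widthLe (S : Set FinSeq) (f : ℕ → ℕ) : Prop := ∀ n, {τ ∈ S | τ.length = n}.ncard ≤ f n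

/-- `S` is almost of width `f`: `|S ∩ 2^n| ≤ f n` for all sufficiently large `n`. -/
def almostWidthLe (S : Set FinSeq) (f : ℕ → ℕ) : Prop :=
  ∀ᶠ n in Filter.atTop, {τ ∈ S | τ.length = n}.ncard ≤ f n

set_option linter.unusedSectionVars false

instance : μC.IsAddLeftInvariant := by unfold μC; infer_instance

namespace S6
open scoped Classical ENNReal

@[simp] lemma res_length (x : Cantor) (n : ℕ) : (res x n).length = n := by
  simp [res]

lemma res_getD (x : Cantor) {i n : ℕ} (h : i < n) : (res x n).getD i 0 = x i := by
  rw [res, List.getD_eq_getElem?_getD]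
  simp [List.getElem?_map, List.getElem?_range h]

lemma res_eq_iff {x : Cantor} {n : ℕ} {σ : FinSeq} :
    res x n = σ ↔ σ.length = n ∧ ∀ i < n, x i = σ.getD i 0 := by
  constructor
  · rintro rfl
    exact ⟨res_length x n, fun i hi => (res_getD x hi).symm⟩
  · rintro ⟨hl, h⟩
    apply List.ext_getElem (by simp [hl])
    intro i h1 h2
    have hi : i < n := by simpa using h1
    have := h i hi
    rw [← List.getD_eq_getElem σ 0 h2, ← this]
    simp [res, List.getElem_map, List.getElem_range]

lemma res_eq_res_iff {x y : Cantor} {m : ℕ} :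
    res x m = res y m ↔ ∀ i < m, x i = y i := by
  rw [res_eq_iff]
  simp only [res_length, true_and]
  exact ⟨fun h i hi => (h i hi).trans (res_getD y hi), fun h i hi => (h i hi).trans (res_getD y hi).symm⟩

/-- take of res -/
lemma res_take (x : Cantor) {m N : ℕ} (h : m ≤ N) : (res x N).take m = res x m := by
  simp [res, ← List.map_take, List.take_range, Nat.min_eq_left h]

/-- the string of length n as all sequences -/
noncomputable def allSeq (m : ℕ) : Finset FinSeq :=
  (Finset.univ : Finset (Fin m → ZMod 2)).image List.ofFn

lemma mem_allSeq {m : ℕ} {σ : FinSeq} : σ ∈ allSeq m ↔ σ.length = m := by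
  constructor
  · intro h
    obtain ⟨f, -, rfl⟩ := Finset.mem_image.1 h
    simp
  · intro h
    subst h
    exact Finset.mem_image.2 ⟨σ.get, Finset.mem_univ _, List.ofFn_get σ⟩

lemma card_allSeq (m : ℕ) : (allSeq m).card = 2 ^ m := by
  rw [allSeq, Finset.card_image_of_injective _ List.ofFn_injective]
  simp

def Cyl (σ : FinSeq) : Set Cantor := {y | res y σ.length = σ}

lemma mem_Cyl {σ : FinSeq} {y : Cantor} : y ∈ Cyl σ ↔ ∀ i < σ.length, y i = σ.getD i 0 := by
  rw [Cyl, Set.mem_setOf_eq, res_eq_iff]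
  simp

lemma measurableSet_Cyl (σ : FinSeq) : MeasurableSet (Cyl σ) := by
  have : Cyl σ = ⋂ i ∈ Finset.range σ.length, {y : Cantor | y i = σ.getD i 0} := by
    ext y; simp [mem_Cyl]
  rw [this]
  exact MeasurableSet.biInter (Finset.range σ.length).countable_toSet
    (fun i _ => (continuous_apply i).measurable (measurableSet_singleton _))


lemma zmod2_cases : ∀ x : ZMod 2, x = 0 ∨ x = 1 := by decide

lemma μC_univ : μC Set.univ = 1 := by
  have := MeasureTheory.Measure.addHaarMeasure_self (K₀ := (⊤ : TopologicalSpace.PositiveCompacts Cantor))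
  simpa [μC] using this

lemma μC_Cyl_eq (σ τ : FinSeq) (h : σ.length = τ.length) : μC (Cyl σ) = μC (Cyl τ) := by
  set x : Cantor := fun i => σ.getD i 0 + τ.getD i 0 with hx
  have : Cyl τ = (fun y => x + y) ⁻¹' (Cyl σ) := by
    ext y
    simp only [Set.mem_preimage, mem_Cyl, Pi.add_apply, hx]
    constructor
    · intro hy i hi
      rw [hy i (h ▸ hi)]
      have : ∀ a b : ZMod 2, a + b + b = a := by decide
      exact this _ _
    · intro hy i hi
      have h2 := hy i (h ▸ hi)
      have : ∀ a b c : ZMod 2, a + b + c = a → c = b := by decide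
      exact this _ _ _ h2
  rw [this, measure_preimage_add]

lemma disjoint_Cyl {σ τ : FinSeq} (h : σ.length = τ.length) (hne : σ ≠ τ) :
    Disjoint (Cyl σ) (Cyl τ) := by
  rw [Set.disjoint_left]
  intro y hys hyt
  rw [Cyl, Set.mem_setOf_eq] at hys hyt
  exact hne (hys ▸ (h ▸ hyt : res y σ.length = τ) )

lemma union_Cyl (m : ℕ) : ⋃ σ ∈ allSeq m, Cyl σ = Set.univ := by
  ext y
  simp only [Set.mem_iUnion, Set.mem_univ, iff_true]
  exact ⟨res y m, mem_allSeq.2 (res_length y m), by simp [Cyl, res_length]⟩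

lemma μC_Cyl (σ : FinSeq) : μC (Cyl σ) = (2 ^ σ.length)⁻¹ := by
  set m := σ.length with hm
  have hsum : ∑ τ ∈ allSeq m, μC (Cyl τ) = 1 := by
    rw [← measure_biUnion_finset _ (fun τ _ => measurableSet_Cyl τ), union_Cyl, μC_univ]
    intro a ha b hb hab
    exact disjoint_Cyl ((mem_allSeq.1 ha).trans (mem_allSeq.1 hb).symm) hab
  have heq : ∀ τ ∈ allSeq m, μC (Cyl τ) = μC (Cyl σ) := fun τ hτ =>
    μC_Cyl_eq τ σ ((mem_allSeq.1 hτ).trans hm)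
  rw [Finset.sum_congr rfl heq, Finset.sum_const, card_allSeq] at hsum
  rw [nsmul_eq_mul] at hsum
  push_cast at hsum
  have h2 : ((2:ENNReal) ^ m) ≠ 0 := by positivity
  have h2t : ((2:ENNReal) ^ m) ≠ ⊤ := by
    exact ENNReal.pow_ne_top (by norm_num)
  calc μC (Cyl σ) = ((2:ENNReal)^m)⁻¹ * (((2:ENNReal)^m) * μC (Cyl σ)) := by
        rw [← mul_assoc, ENNReal.inv_mul_cancel h2 h2t, one_mul]
    _ = (2 ^ m)⁻¹ := by rw [hsum, mul_one]


lemma card_split (a c : ℕ) (P : FinSeq → Prop) :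
    ((allSeq (a + c)).filter P).card
      = ∑ σ ∈ allSeq a, ((allSeq c).filter (fun ρ => P (σ ++ ρ))).card := by
  have h1 : ((allSeq a ×ˢ allSeq c).filter (fun p => P (p.1 ++ p.2))).card
      = ∑ σ ∈ allSeq a, ((allSeq c).filter (fun ρ => P (σ ++ ρ))).card := by
    rw [Finset.card_filter, Finset.sum_product]
    exact Finset.sum_congr rfl fun σ _ => (Finset.card_filter _ _).symm
  rw [← h1]
  apply Finset.card_nbij' (i := fun σ => (σ.take a, σ.drop a)) (j := fun p => p.1 ++ p.2)
  · intro σ hσ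
    rw [Finset.mem_coe, Finset.mem_filter] at hσ
    obtain ⟨h1', h2'⟩ := hσ
    rw [mem_allSeq] at h1'
    rw [Finset.mem_coe, Finset.mem_filter, Finset.mem_product, mem_allSeq, mem_allSeq]
    refine ⟨⟨by simp [h1'], by simp [h1']⟩, by simpa [List.take_append_drop] using h2'⟩
  · intro p hp
    rw [Finset.mem_coe, Finset.mem_filter, Finset.mem_product, mem_allSeq, mem_allSeq] at hp
    rw [Finset.mem_coe, Finset.mem_filter, mem_allSeq]
    exact ⟨by simp [hp.1.1, hp.1.2], hp.2⟩
  · intro σ hσ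
    simp [List.take_append_drop]
  · intro p hp
    rw [Finset.mem_coe, Finset.mem_filter, Finset.mem_product, mem_allSeq, mem_allSeq] at hp
    obtain ⟨⟨ha, hc⟩, -⟩ := hp
    simp [← ha, List.take_left, List.drop_left]

lemma card_zero_on (c : ℕ) (W : Finset ℕ) (hW : ∀ k ∈ W, k < c) :
    ((allSeq c).filter (fun ρ => ∀ k ∈ W, ρ.getD k 0 = 0)).card = 2 ^ (c - W.card) := by
  rw [allSeq, Finset.filter_image, Finset.card_image_of_injective _ List.ofFn_injective]
  have hiff : ∀ f : Fin c → ZMod 2,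
      (∀ k ∈ W, (List.ofFn f).getD k 0 = 0) ↔ ∀ i : Fin c, (i : ℕ) ∈ W → f i = 0 := by
    intro f
    constructor
    · intro h i hi
      have h2 := h i hi
      rwa [List.getD_eq_getElem _ _ (by simp [i.isLt]), List.getElem_ofFn, Fin.eta] at h2
    · intro h k hk
      have hkc := hW k hk
      rw [List.getD_eq_getElem _ _ (by simp [hkc]), List.getElem_ofFn]
      exact h ⟨k, hkc⟩ hk
  have : (Finset.univ.filter (fun f : Fin c → ZMod 2 => ∀ k ∈ W, (List.ofFn f).getD k 0 = 0))
      = Fintype.piFinset (fun i : Fin c => if (i : ℕ) ∈ W then ({0} : Finset (ZMod 2)) else Finset.univ) := by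
    ext f
    rw [Finset.mem_filter, Fintype.mem_piFinset]
    simp only [Finset.mem_univ, true_and, hiff f]
    constructor
    · intro h i
      by_cases hi : (i : ℕ) ∈ W
      · simp [hi, h i hi]
      · simp [hi]
    · intro h i hi
      have := h i
      rwa [if_pos hi, Finset.mem_singleton] at this
  rw [this, Fintype.card_piFinset]
  have : ∀ i : Fin c, (if (i : ℕ) ∈ W then ({0} : Finset (ZMod 2)) else Finset.univ).card
      = if (i : ℕ) ∈ W then 1 else 2 := by
    intro i; by_cases hi : (i : ℕ) ∈ W <;> simp [hi]
  rw [Finset.prod_congr rfl (fun i _ => this i), Finset.prod_ite]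
  simp only [Finset.prod_const, one_pow, one_mul]
  have hcards : (Finset.univ.filter (fun i : Fin c => (i : ℕ) ∈ W)).card = W.card := by
    refine Finset.card_nbij (fun i => (i : ℕ)) ?_ ?_ ?_
    · intro i hi; simpa using (Finset.mem_filter.1 hi).2
    · intro i _ j _ hij
      exact Fin.ext hij
    · intro k hk
      rw [Finset.mem_coe] at hk
      exact ⟨⟨k, hW k hk⟩, by simpa using hk, rfl⟩
  have := Finset.card_filter_add_card_filter_not
    (s := (Finset.univ : Finset (Fin c))) (p := fun i => (i : ℕ) ∈ W)
  rw [Finset.card_univ, Fintype.card_fin] at this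
  congr 1
  omega

noncomputable def fct (i : ℕ) : ℝ := 1 - (2 : ℝ)⁻¹ ^ (i + 1)
noncomputable def q (m : ℕ) : ℝ := ∏ i ∈ Finset.range m, fct i
noncomputable def Lprod : ℝ := ⨅ m, q m

lemma fct_pos (i : ℕ) : 0 < fct i := by
  have h1 : (2 : ℝ)⁻¹ ^ (i + 1) ≤ (2 : ℝ)⁻¹ ^ 1 :=
    pow_le_pow_of_le_one (by norm_num) (by norm_num) (by omega)
  simp only [fct]
  norm_num at h1 ⊢
  linarith

lemma fct_le_one (i : ℕ) : fct i ≤ 1 := by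
  have : (0:ℝ) < (2 : ℝ)⁻¹ ^ (i + 1) := by positivity
  simp only [fct]; linarith

lemma q_pos (m : ℕ) : 0 < q m := Finset.prod_pos fun i _ => fct_pos i

lemma q_succ (m : ℕ) : q (m + 1) = q m * fct m := Finset.prod_range_succ _ _

lemma q_anti : Antitone q := by
  apply antitone_nat_of_succ_le
  intro m
  rw [q_succ]
  nlinarith [q_pos m, fct_pos m, fct_le_one m]

lemma q_lb (m : ℕ) : 1/4 + (2:ℝ)⁻¹ ^ (m + 1) / 2 ≤ q (m + 1) := by
  induction m with
  | zero =>
    rw [q_succ]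
    simp [q, fct]
    norm_num
  | succ m ih =>
    rw [q_succ, fct]
    set x : ℝ := (2:ℝ)⁻¹ ^ (m + 1) with hx
    have hxpos : (0:ℝ) < x := by positivity
    have hxle : x ≤ 2⁻¹ := by
      rw [hx]
      calc (2:ℝ)⁻¹ ^ (m + 1) ≤ (2:ℝ)⁻¹ ^ 1 :=
        pow_le_pow_of_le_one (by norm_num) (by norm_num) (by omega)
      _ = 2⁻¹ := pow_one _
    have h2 : (2:ℝ)⁻¹ ^ (m + 1 + 1) = x / 2 := by rw [hx]; ring
    rw [h2]
    nlinarith [q_pos (m + 1)]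

lemma q_ge (m : ℕ) : (1:ℝ)/4 ≤ q m := by
  cases m with
  | zero => simp [q]; norm_num
  | succ m =>
    have h := q_lb m
    have : (0:ℝ) < (2:ℝ)⁻¹ ^ (m + 1) / 2 := by positivity
    linarith

lemma q_bddBelow : BddBelow (Set.range q) := ⟨1/4, by rintro x ⟨m, rfl⟩; exact q_ge m⟩

lemma q_tendsto : Filter.Tendsto q Filter.atTop (nhds Lprod) :=
  tendsto_atTop_ciInf q_anti q_bddBelow

lemma Lprod_ge : (1:ℝ)/4 ≤ Lprod := le_ciInf q_ge

lemma prod_subset_le {s t : Finset ℕ} (h : s ⊆ t) :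
    ∏ i ∈ t, fct i ≤ ∏ i ∈ s, fct i := by
  rw [← Finset.prod_sdiff h]
  have h1 : ∏ i ∈ t \ s, fct i ≤ 1 :=
    Finset.prod_le_one (fun i _ => (fct_pos i).le) (fun i _ => fct_le_one i)
  have h2 : (0:ℝ) < ∏ i ∈ s, fct i := Finset.prod_pos fun i _ => fct_pos i
  nlinarith

lemma hasProd_fct : HasProd fct Lprod := by
  have hbdd : BddBelow (Set.range fun s : Finset ℕ => ∏ i ∈ s, fct i) := by
    refine ⟨0, ?_⟩
    rintro x ⟨s, rfl⟩
    exact (Finset.prod_pos fun i _ => fct_pos i).le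
  have hanti : Antitone (fun s : Finset ℕ => ∏ i ∈ s, fct i) := fun s t h => prod_subset_le h
  have h1 : Filter.Tendsto (fun s : Finset ℕ => ∏ i ∈ s, fct i) Filter.atTop
      (nhds (⨅ s : Finset ℕ, ∏ i ∈ s, fct i)) := tendsto_atTop_ciInf hanti hbdd
  have h2 : (⨅ s : Finset ℕ, ∏ i ∈ s, fct i) = Lprod := by
    apply le_antisymm
    · apply le_ciInf
      intro m
      exact ciInf_le hbdd (Finset.range m)
    · apply le_ciInf
      intro s
      obtain ⟨M, hM⟩ : ∃ M, s ⊆ Finset.range M := ⟨(s.sup id) + 1, fun i hi =>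
        Finset.mem_range.2 (Nat.lt_succ_of_le (Finset.le_sup (f := id) hi))⟩
      calc Lprod ≤ q M := ciInf_le q_bddBelow M
        _ ≤ ∏ i ∈ s, fct i := prod_subset_le hM
  rw [h2] at h1
  exact h1

lemma tprod_fct : ∏' i : ℕ, (1 - (2 : ℝ)⁻¹ ^ (i + 1)) = Lprod := hasProd_fct.tprod_eq


/-- extension of a finite sequence by zeros -/
def ext (σ : FinSeq) : Cantor := fun i => σ.getD i 0

section Main
variable (n n' : ℕ → ℕ) (u : ℕ → FinSeq → Finset ℕ)

def Good (j : ℕ) (y : Cantor) : Prop := ∃ k ∈ u j (res y (n' j)), y k = 1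

def CS (m : ℕ) : Set Cantor := {y | ∀ j, 0 < j → j ≤ m → Good n' u j y}

noncomputable def GF (m : ℕ) : Finset FinSeq :=
  (allSeq (n (m + 1))).filter (fun σ => ∀ j, 0 < j → j ≤ m → Good n' u j (ext σ))

variable (hn : StrictMono n) (hnn' : ∀ i, n i < n' i)
  (hgap : ∀ i, n' i + i * 2 ^ n' i < n (i + 1))
  (hcard : ∀ i, 0 < i → ∀ τ : FinSeq, τ.length = n' i → (u i τ).card = i)
  (hsub : ∀ i, 0 < i → ∀ τ : FinSeq, τ.length = n' i →
      ↑(u i τ) ⊆ Set.Ico (n' i) (n (i + 1)))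

include hgap in
lemma n'_lt (j : ℕ) : n' j < n (j + 1) := by
  have := hgap j
  have h1 : 1 ≤ 2 ^ n' j := Nat.one_le_two_pow
  nlinarith [Nat.zero_le (j * 2 ^ n' j)]

include hgap hsub in
lemma good_congr {j : ℕ} (hj : 0 < j) {x y : Cantor} (h : ∀ i < n (j + 1), x i = y i) :
    Good n' u j x ↔ Good n' u j y := by
  have hlt : n' j < n (j + 1) := n'_lt n n' hgap j
  have hres : res x (n' j) = res y (n' j) :=
    res_eq_res_iff.2 fun i hi => h i (hi.trans hlt)
  have hval : ∀ k ∈ u j (res x (n' j)), x k = y k := by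
    intro k hk
    have := hsub j hj (res x (n' j)) (res_length x (n' j)) hk
    exact h k this.2
  constructor
  · rintro ⟨k, hk, hv⟩
    exact ⟨k, hres ▸ hk, (hval k hk) ▸ hv⟩
  · rintro ⟨k, hk, hv⟩
    rw [← hres] at hk
    exact ⟨k, hk, (hval k hk).symm ▸ hv⟩

lemma ext_append_lt (σ ρ : FinSeq) {i : ℕ} (h : i < σ.length) : ext (σ ++ ρ) i = ext σ i := by
  simp [ext, List.getD_eq_getElem?_getD, List.getElem?_append, h]

include hn hgap hsub in
lemma goodAll_append {m : ℕ} {σ ρ : FinSeq} (hlen : n (m + 1) ≤ σ.length) :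
    (∀ j, 0 < j → j ≤ m → Good n' u j (ext (σ ++ ρ))) ↔
      (∀ j, 0 < j → j ≤ m → Good n' u j (ext σ)) := by
  have key : ∀ j, 0 < j → j ≤ m → (Good n' u j (ext (σ ++ ρ)) ↔ Good n' u j (ext σ)) := by
    intro j hj hjm
    apply good_congr n n' u hgap hsub hj
    intro i hi
    have : i < σ.length := lt_of_lt_of_le (lt_of_lt_of_le hi
      (hn.monotone (Nat.succ_le_succ hjm))) hlen
    exact ext_append_lt σ ρ this
  exact ⟨fun h j hj hjm => (key j hj hjm).mp (h j hj hjm),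
    fun h j hj hjm => (key j hj hjm).mpr (h j hj hjm)⟩

lemma ext_append_ge (σ ρ : FinSeq) {k : ℕ} (h : σ.length ≤ k) :
    ext (σ ++ ρ) k = ρ.getD (k - σ.length) 0 := by
  show (σ ++ ρ).getD k 0 = _
  exact List.getD_append_right _ _ _ _ h

lemma res_ext_append (τ ρ : FinSeq) : res (ext (τ ++ ρ)) τ.length = τ := by
  rw [res_eq_iff]
  refine ⟨rfl, fun i hi => ?_⟩
  show (τ ++ ρ).getD i 0 = _
  exact List.getD_append _ _ _ _ hi

/-- counting a predicate depending only on a prefix -/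
lemma card_filter_prefix (a c : ℕ) (Q : FinSeq → Prop)
    (hQ : ∀ σ ρ, σ.length = a → ρ.length = c → (Q (σ ++ ρ) ↔ Q σ)) :
    ((allSeq (a + c)).filter Q).card = ((allSeq a).filter Q).card * 2 ^ c := by
  rw [card_split]
  have h1 : ∀ σ ∈ allSeq a,
      ((allSeq c).filter (fun ρ => Q (σ ++ ρ))).card = if Q σ then 2 ^ c else 0 := by
    intro σ hσ
    have : (allSeq c).filter (fun ρ => Q (σ ++ ρ)) = (allSeq c).filter (fun _ => Q σ) :=
      Finset.filter_congr fun ρ hρ => by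
        rw [hQ σ ρ (mem_allSeq.1 hσ) (mem_allSeq.1 hρ)]
    rw [this]
    by_cases h : Q σ
    · rw [if_pos h, Finset.filter_true_of_mem fun _ _ => h, card_allSeq]
    · rw [if_neg h, Finset.filter_false_of_mem fun _ _ => h, Finset.card_empty]
  rw [Finset.sum_congr rfl h1, ← Finset.sum_filter, Finset.sum_const, smul_eq_mul]

include hn hgap hsub in
lemma card_GoodAll_of_le {m a : ℕ} (ha : n (m + 1) ≤ a) :
    ((allSeq a).filter (fun σ => ∀ j, 0 < j → j ≤ m → Good n' u j (ext σ))).card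
      = (GF n n' u m).card * 2 ^ (a - n (m + 1)) := by
  obtain ⟨c, rfl⟩ : ∃ c, a = n (m + 1) + c := ⟨a - n (m + 1), by omega⟩
  rw [GF, Nat.add_sub_cancel_left]
  exact card_filter_prefix _ _ _ fun σ ρ hσ _ =>
    goodAll_append n n' u hn hgap hsub (hlen := hσ.symm ▸ le_refl _)

include hn hnn' hgap hcard hsub in
lemma card_GF_succ (m : ℕ) :
    (GF n n' u (m + 1)).card
      = ((allSeq (n' (m + 1))).filter (fun σ => ∀ j, 0 < j → j ≤ m → Good n' u j (ext σ))).card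
        * (2 ^ (n (m + 2) - n' (m + 1)) - 2 ^ (n (m + 2) - n' (m + 1) - (m + 1))) := by
  set a' := n' (m + 1) with ha'
  have hm1 : 0 < m + 1 := Nat.succ_pos m
  have hab : a' + (m + 1) ≤ n (m + 2) := by
    have h0 := hgap (m + 1)
    have h1 : m + 1 ≤ (m + 1) * 2 ^ n' (m + 1) :=
      Nat.le_mul_of_pos_right _ (by positivity)
    have h2 : n (m + 1 + 1) = n (m + 2) := rfl
    omega
  obtain ⟨c, hc⟩ : ∃ c, n (m + 2) = a' + c := ⟨n (m + 2) - a', by omega⟩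
  have hsc : m + 1 ≤ c := by omega
  have hcc : n (m + 2) - a' = c := by omega
  rw [hcc, GF, hc, card_split]
  -- inner counting
  have key : ∀ τ ∈ allSeq a',
      ((allSeq c).filter (fun ρ => ∀ j, 0 < j → j ≤ m + 1 → Good n' u j (ext (τ ++ ρ)))).card
        = if (∀ j, 0 < j → j ≤ m → Good n' u j (ext τ)) then 2 ^ c - 2 ^ (c - (m + 1)) else 0 := by
    intro τ hτ
    have hτlen : τ.length = a' := mem_allSeq.1 hτ
    have husub := hsub (m + 1) hm1 τ hτlen
    have hucard := hcard (m + 1) hm1 τ hτlen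
    -- the split of the predicate
    have hsplit : ∀ ρ ∈ allSeq c,
        (∀ j, 0 < j → j ≤ m + 1 → Good n' u j (ext (τ ++ ρ)))
          ↔ ((∀ j, 0 < j → j ≤ m → Good n' u j (ext τ)) ∧
              ∃ k ∈ u (m + 1) τ, ρ.getD (k - a') 0 = 1) := by
      intro ρ hρ
      have hρlen : ρ.length = c := mem_allSeq.1 hρ
      have hgm : (∀ j, 0 < j → j ≤ m → Good n' u j (ext (τ ++ ρ)))
          ↔ (∀ j, 0 < j → j ≤ m → Good n' u j (ext τ)) :=
        goodAll_append n n' u hn hgap hsub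
          (hlen := hτlen ▸ le_of_lt (lt_of_lt_of_le (hnn' (m + 1)) (le_refl _)))
      have hres : res (ext (τ ++ ρ)) a' = τ := by
        rw [← hτlen]; exact res_ext_append τ ρ
      have hgood : Good n' u (m + 1) (ext (τ ++ ρ)) ↔
          ∃ k ∈ u (m + 1) τ, ρ.getD (k - a') 0 = 1 := by
        rw [Good, ← ha', hres]
        apply exists_congr; intro k
        apply and_congr_right; intro hk
        have hk' := husub hk
        have hk1 : τ.length ≤ k := by rw [hτlen]; exact hk'.1
        rw [ext_append_ge τ ρ hk1, hτlen]
      constructor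
      · intro h
        refine ⟨hgm.1 (fun j hj hjm => h j hj (hjm.trans (Nat.le_succ m))), hgood.1 (h (m+1) hm1 le_rfl)⟩
      · rintro ⟨h1, h2⟩
        intro j hj hjm
        rcases Nat.lt_or_ge j (m + 1) with hlt | hge
        · exact hgm.2 h1 j hj (Nat.lt_succ_iff.1 hlt)
        · have : j = m + 1 := le_antisymm hjm hge
          subst this
          exact hgood.2 h2
    rw [Finset.filter_congr hsplit]
    by_cases hgood : ∀ j, 0 < j → j ≤ m → Good n' u j (ext τ)
    · rw [if_pos hgood]
      have : (allSeq c).filter (fun ρ => (∀ j, 0 < j → j ≤ m → Good n' u j (ext τ)) ∧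
              ∃ k ∈ u (m + 1) τ, ρ.getD (k - a') 0 = 1)
          = (allSeq c).filter (fun ρ => ∃ k ∈ u (m + 1) τ, ρ.getD (k - a') 0 = 1) :=
        Finset.filter_congr fun ρ _ => and_iff_right hgood
      rw [this]
      -- complementary count
      set W : Finset ℕ := (u (m + 1) τ).image (fun k => k - a') with hW
      have hWsub : ∀ k ∈ W, k < c := by
        intro k hk
        obtain ⟨k₀, hk₀, rfl⟩ := Finset.mem_image.1 hk
        have h2 := husub hk₀
        have := h2.2
        rw [hc] at this
        omega
      have hWcard : W.card = m + 1 := by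
        rw [hW, Finset.card_image_of_injOn, hucard]
        intro x hx y hy hxy
        have hx' := (husub hx).1
        have hy' := (husub hy).1
        simp only at hxy
        omega
      have hE : ∀ ρ : FinSeq, (∃ k ∈ u (m + 1) τ, ρ.getD (k - a') 0 = 1)
          ↔ ¬ (∀ k ∈ W, ρ.getD k 0 = 0) := by
        intro ρ
        push_neg
        constructor
        · rintro ⟨k, hk, hv⟩
          refine ⟨k - a', Finset.mem_image_of_mem _ hk, by rw [hv]; exact one_ne_zero⟩
        · rintro ⟨k, hk, hv⟩
          obtain ⟨k₀, hk₀, rfl⟩ := Finset.mem_image.1 hk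
          rcases zmod2_cases (ρ.getD (k₀ - a') 0) with h | h
          · exact absurd h hv
          · exact ⟨k₀, hk₀, h⟩
      have hfilter : (allSeq c).filter (fun ρ => ∃ k ∈ u (m + 1) τ, ρ.getD (k - a') 0 = 1)
          = (allSeq c).filter (fun ρ => ¬ ∀ k ∈ W, ρ.getD k 0 = 0) :=
        Finset.filter_congr fun ρ _ => by rw [hE]
      rw [hfilter]
      have hadd := Finset.card_filter_add_card_filter_not
        (s := allSeq c) (p := fun ρ => ∀ k ∈ W, ρ.getD k 0 = 0)
      rw [card_zero_on c W hWsub, hWcard, card_allSeq] at hadd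
      omega
    · rw [if_neg hgood]
      rw [Finset.filter_false_of_mem, Finset.card_empty]
      intro ρ _
      exact fun h => hgood h.1
  rw [Finset.sum_congr rfl key, ← Finset.sum_filter, Finset.sum_const, smul_eq_mul]

set_option linter.unusedSectionVars false in
lemma card_GF_zero : (GF n n' u 0).card = 2 ^ (n 1) := by
  rw [GF, Finset.filter_true_of_mem, card_allSeq]
  intro σ _
  intro j hj hjm
  omega

end Main

section Main
variable (n n' : ℕ → ℕ) (u : ℕ → FinSeq → Finset ℕ)
variable (hn : StrictMono n) (hnn' : ∀ i, n i < n' i)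
  (hgap : ∀ i, n' i + i * 2 ^ n' i < n (i + 1))
  (hcard : ∀ i, 0 < i → ∀ τ : FinSeq, τ.length = n' i → (u i τ).card = i)
  (hsub : ∀ i, 0 < i → ∀ τ : FinSeq, τ.length = n' i →
      ↑(u i τ) ⊆ Set.Ico (n' i) (n (i + 1)))

include hn hgap hsub in
lemma mem_CS_iff {m : ℕ} {y : Cantor} :
    y ∈ CS n' u m ↔ res y (n (m + 1)) ∈ GF n n' u m := by
  rw [CS, Set.mem_setOf_eq, GF, Finset.mem_filter, mem_allSeq]
  simp only [res_length, true_and]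
  have key : ∀ j, 0 < j → j ≤ m →
      (Good n' u j y ↔ Good n' u j (ext (res y (n (m + 1))))) := by
    intro j hj hjm
    apply good_congr n n' u hgap hsub hj
    intro i hi
    have hiN : i < n (m + 1) := lt_of_lt_of_le hi (hn.monotone (Nat.succ_le_succ hjm))
    exact (res_getD y hiN).symm
  exact ⟨fun h j hj hjm => (key j hj hjm).1 (h j hj hjm),
    fun h j hj hjm => (key j hj hjm).2 (h j hj hjm)⟩

include hn hgap hsub in
lemma CS_eq_union (m : ℕ) : CS n' u m = ⋃ σ ∈ GF n n' u m, Cyl σ := by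
  ext y
  simp only [Set.mem_iUnion, exists_prop]
  constructor
  · intro h
    refine ⟨res y (n (m + 1)), (mem_CS_iff n n' u hn hgap hsub).1 h, ?_⟩
    show res y (res y (n (m+1))).length = _
    rw [res_length]
  · rintro ⟨σ, hσ, hy⟩
    have hlen : σ.length = n (m + 1) := mem_allSeq.1 (Finset.mem_filter.1 hσ).1
    have : res y (n (m + 1)) = σ := by rw [← hlen]; exact hy
    exact (mem_CS_iff n n' u hn hgap hsub).2 (this ▸ hσ)

include hn hgap hsub in
lemma measurableSet_CS (m : ℕ) : MeasurableSet (CS n' u m) := by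
  rw [CS_eq_union n n' u hn hgap hsub]
  exact (GF n n' u m).measurableSet_biUnion (fun σ _ => measurableSet_Cyl σ)

include hn hgap hsub in
lemma μC_CS (m : ℕ) :
    μC (CS n' u m) = (GF n n' u m).card * ((2 : ℝ≥0∞) ^ (n (m + 1)))⁻¹ := by
  have hpd : (↑(GF n n' u m) : Set FinSeq).PairwiseDisjoint Cyl := by
    intro σ hσ τ hτ hne
    exact disjoint_Cyl (((mem_allSeq.1 (Finset.mem_filter.1 hσ).1)).trans
      (mem_allSeq.1 (Finset.mem_filter.1 hτ).1).symm) hne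
  rw [CS_eq_union n n' u hn hgap hsub,
    measure_biUnion_finset hpd (fun σ _ => measurableSet_Cyl σ)]
  have : ∀ σ ∈ GF n n' u m, μC (Cyl σ) = ((2 : ℝ≥0∞) ^ (n (m + 1)))⁻¹ := by
    intro σ hσ
    rw [μC_Cyl, mem_allSeq.1 (Finset.mem_filter.1 hσ).1]
  rw [Finset.sum_congr rfl this, Finset.sum_const, nsmul_eq_mul]

include hn hnn' hgap hcard hsub in
lemma card_GF_real (m : ℕ) : ((GF n n' u m).card : ℝ) = 2 ^ (n (m + 1)) * q m := by
  induction m with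
  | zero =>
    rw [card_GF_zero]
    simp [q]
  | succ m ih =>
    have hnn := hnn' (m + 1)
    have hg := hgap (m + 1)
    have h2' : m + 1 ≤ (m + 1) * 2 ^ (n' (m + 1)) :=
      Nat.le_mul_of_pos_right _ (by positivity)
    have hsb : n' (m + 1) + (m + 1) ≤ n (m + 2) := by
      have h3 : n (m + 1 + 1) = n (m + 2) := rfl
      omega
    obtain ⟨d, hd⟩ : ∃ d, n' (m + 1) = n (m + 1) + d := ⟨n' (m + 1) - n (m + 1), by omega⟩
    obtain ⟨c, hc⟩ : ∃ c, n (m + 2) = n' (m + 1) + c := ⟨n (m + 2) - n' (m + 1), by omega⟩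
    obtain ⟨e, he⟩ : ∃ e, c = e + (m + 1) := ⟨c - (m + 1), by omega⟩
    have h1 := card_GF_succ n n' u hn hnn' hgap hcard hsub m
    rw [card_GoodAll_of_le n n' u hn hgap hsub (le_of_lt hnn)] at h1
    have hcc : n (m + 2) - n' (m + 1) = c := by omega
    have hdd : n' (m + 1) - n (m + 1) = d := by omega
    have hee : c - (m + 1) = e := by omega
    rw [hcc, hdd, hee] at h1
    have hle : (2:ℕ) ^ e ≤ 2 ^ c := Nat.pow_le_pow_right (by norm_num) (by omega)
    have h1R : ((GF n n' u (m + 1)).card : ℝ)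
        = ((GF n n' u m).card : ℝ) * 2 ^ d * ((2:ℝ) ^ c - 2 ^ e) := by
      rw [h1]
      push_cast [Nat.cast_sub hle]
      ring
    have hpowb : (2:ℝ) ^ (n (m + 2)) = 2 ^ (n (m + 1)) * 2 ^ d * 2 ^ e * 2 ^ (m + 1) := by
      rw [← pow_add, ← pow_add, ← pow_add]
      congr 1
      omega
    rw [h1R, ih, q_succ, fct, hpowb]
    have hinv : ((2:ℝ)⁻¹) ^ (m + 1) = ((2:ℝ) ^ (m + 1))⁻¹ := by rw [inv_pow]
    rw [hinv]
    have hce : (2:ℝ) ^ c = 2 ^ e * 2 ^ (m + 1) := by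
      rw [he, pow_add]
    rw [hce]
    have hne2 : ((2:ℝ) ^ (m + 1)) ≠ 0 := by positivity
    field_simp

include hn hnn' hgap hcard hsub in
lemma μC_CS_real (m : ℕ) : μC (CS n' u m) = ENNReal.ofReal (q m) := by
  rw [μC_CS n n' u hn hgap hsub m]
  have h2 : (0:ℝ) < 2 ^ (n (m + 1)) := by positivity
  have hq : q m = ((GF n n' u m).card : ℝ) / 2 ^ (n (m + 1)) := by
    rw [card_GF_real n n' u hn hnn' hgap hcard hsub m]
    field_simp
  rw [hq, ENNReal.ofReal_div_of_pos h2, div_eq_mul_inv]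
  congr 1
  · exact (ENNReal.ofReal_natCast _).symm
  · congr 1
    rw [ENNReal.ofReal_pow (by norm_num)]
    norm_num

lemma CS_antitone : Antitone (CS n' u) := by
  intro m m' h y hy j hj hjm
  exact hy j hj (hjm.trans h)

lemma B_eq_iInter :
    {y : Cantor | ∀ j, 0 < j → Good n' u j y} = ⋂ m, CS n' u m := by
  ext y
  simp only [Set.mem_setOf_eq, Set.mem_iInter]
  exact ⟨fun h m j hj _ => h j hj, fun h j hj => h j j hj le_rfl⟩

include hgap hsub in
lemma LimT_eq_B :
    LimT {σ | ∃ y ∈ {y : Cantor | ∀ j, 0 < j → Good n' u j y}, ∃ m, σ = res y m}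
      = {y : Cantor | ∀ j, 0 < j → Good n' u j y} := by
  ext x
  constructor
  · intro hx j hj
    have hmem := hx (n (j + 1))
    obtain ⟨y, hyB, m, heq⟩ := hmem
    have hlen : n (j + 1) = m := by
      have := congrArg List.length heq
      rwa [res_length, res_length] at this
    subst hlen
    have hagree : ∀ i < n (j + 1), x i = y i := res_eq_res_iff.1 heq
    exact (good_congr n n' u hgap hsub hj hagree).2 (hyB j hj)
  · intro hx N
    exact ⟨x, hx, N, rfl⟩

end Main
end S6

/-- measure computation for the tree of Lemma 10. -/
theorem stmt6 (n n' : ℕ → ℕ) (hn : StrictMono n) (h0 : n 0 = 0)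
    (hnn' : ∀ i, n i < n' i) (hgap : ∀ i, n' i + i * 2 ^ n' i < n (i + 1))
    (u : ℕ → FinSeq → Finset ℕ)
    (hcard : ∀ i, 0 < i → ∀ τ : FinSeq, τ.length = n' i → (u i τ).card = i)
    (hsub : ∀ i, 0 < i → ∀ τ : FinSeq, τ.length = n' i →
      ↑(u i τ) ⊆ Set.Ico (n' i) (n (i + 1)))
    (hdisj : ∀ i, 0 < i → ∀ τ₁ τ₂ : FinSeq, τ₁.length = n' i → τ₂.length = n' i →
      τ₁ ≠ τ₂ → Disjoint (u i τ₁) (u i τ₂))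
    (B : Set Cantor) (hB : B = {y : Cantor | ∀ j, 0 < j → ∃ k ∈ u j (res y (n' j)), y k = 1})
    (T : Set FinSeq) (hTdef : T = {σ | ∃ y ∈ B, ∃ m, σ = res y m}) :
    μC (LimT T) = ENNReal.ofReal (∏' i : ℕ, (1 - (2 : ℝ)⁻¹ ^ (i + 1))) ∧
      0 < μC (LimT T) := by
  subst hTdef
  have hBG : B = {y : Cantor | ∀ j, 0 < j → S6.Good n' u j y} := hB
  subst hBG
  have hLim : LimT {σ | ∃ y ∈ {y : Cantor | ∀ j, 0 < j → S6.Good n' u j y}, ∃ m, σ = res y m}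
      = ⋂ m, S6.CS n' u m := by
    rw [S6.LimT_eq_B n n' u hgap hsub, S6.B_eq_iInter n']
  have htend1 : Filter.Tendsto (fun m => μC (S6.CS n' u m)) Filter.atTop
      (nhds (μC (⋂ m, S6.CS n' u m))) := by
    refine tendsto_measure_iInter_atTop
      (fun m => (S6.measurableSet_CS n n' u hn hgap hsub m).nullMeasurableSet)
      (S6.CS_antitone n' u) ⟨0, ?_⟩
    have h1 : μC (S6.CS n' u 0) ≤ 1 := S6.μC_univ ▸ measure_mono (Set.subset_univ _)
    exact ne_top_of_le_ne_top ENNReal.one_ne_top h1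
  have htend2 : Filter.Tendsto (fun m => μC (S6.CS n' u m)) Filter.atTop
      (nhds (ENNReal.ofReal S6.Lprod)) := by
    have heq : (fun m => μC (S6.CS n' u m)) = fun m => ENNReal.ofReal (S6.q m) :=
      funext fun m => S6.μC_CS_real n n' u hn hnn' hgap hcard hsub m
    rw [heq]
    exact (ENNReal.continuous_ofReal.tendsto S6.Lprod).comp S6.q_tendsto
  have hμ : μC (⋂ m, S6.CS n' u m) = ENNReal.ofReal S6.Lprod :=
    tendsto_nhds_unique htend1 htend2
  rw [hLim, hμ, S6.tprod_fct]
  refine ⟨rfl, ?_⟩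
  rw [ENNReal.ofReal_pos]
  linarith [S6.Lprod_ge]
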